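/- Let X be a type, t a natural number, and 𝒞 a finite concept class over X that is K_{t, 2^t}-free. Then there exists an online learner 𝔸 : List (X × Bool) → X → Bool such that for every finite sequence (x₁,y₁),…,(x_T,y_T) of labeled examples with pairwise distinct points x₁,…,x_T that is realizable by 𝒞, the learner 𝔸 makes strictly fewer than 2t mistakes on that sequence. -/

import Mathlib

/-- The concept class `𝒞` contains `K_{s,t}`: there are a finite set `S ⊆ X` of size `s`
and a subset `𝒯 ⊆ 𝒞` of size `t` with `c x = true` for all `x ∈ S`, `c ∈ 𝒯`. -/
def ContainsK {X : Type*} (𝒞 : Finset (X → Bool)) (s t : ℕ) : Prop :=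
  ∃ S : Finset X, S.card = s ∧ ∃ 𝒯 ⊆ 𝒞, 𝒯.card = t ∧ ∀ x ∈ S, ∀ c ∈ 𝒯, c x = true

/-- Number of mistakes of the online learner `𝔸` on a sequence of labeled examples,
given the history `hist` of previously seen examples. -/
def mistakesAux {X : Type*} (𝔸 : List (X × Bool) → X → Bool)
    (hist : List (X × Bool)) : List (X × Bool) → ℕ
  | [] => 0
  | (x, y) :: rest =>
      (if 𝔸 hist x ≠ y then 1 else 0) + mistakesAux 𝔸 (hist ++ [(x, y)]) rest

/-- Number of mistakes of the online learner `𝔸` on a sequence of labeled examples. -/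
def mistakes {X : Type*} (𝔸 : List (X × Bool) → X → Bool) (L : List (X × Bool)) : ℕ :=
  mistakesAux 𝔸 [] L

open Classical in
/-- Version space: concepts consistent with the history. -/
noncomputable def Vs {X : Type*} (𝒞 : Finset (X → Bool)) (hist : List (X × Bool)) :
    Finset (X → Bool) :=
  𝒞.filter (fun c => ∀ p ∈ hist, c p.1 = p.2)

open Classical in
noncomputable def learner {X : Type*} (t : ℕ) (𝒞 : Finset (X → Bool))
    (hist : List (X × Bool)) (x : X) : Bool :=
  if hist.countP (fun p => p.2) < t then false
  else decide ((Vs 𝒞 hist).card < 2 * ((Vs 𝒞 hist).filter (fun c => c x = true)).card)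

open Classical in
lemma Vs_append {X : Type*} (𝒞 : Finset (X → Bool)) (hist : List (X × Bool)) (p : X × Bool) :
    Vs 𝒞 (hist ++ [p]) = (Vs 𝒞 hist).filter (fun c => c p.1 = p.2) := by
  ext c
  simp only [Vs, Finset.mem_filter, List.forall_mem_append, List.forall_mem_singleton, and_assoc]

open Classical in
lemma card_Vs_lt {X : Type*} {t : ℕ} {𝒞 : Finset (X → Bool)}
    (hfree : ¬ ContainsK 𝒞 t (2 ^ t)) (hist : List (X × Bool))
    (hn : (hist.map Prod.fst).Nodup) (hT : t ≤ hist.countP (fun p => p.2)) :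
    (Vs 𝒞 hist).card < 2 ^ t := by
  by_contra hcard
  push_neg at hcard
  -- the list of true-labeled points
  set l : List X := (hist.filter (fun p => p.2)).map Prod.fst with hl
  have hlsub : l.Sublist (hist.map Prod.fst) := List.filter_sublist.map _
  have hlnd : l.Nodup := hlsub.nodup hn
  have hllen : t ≤ l.length := by
    simpa [hl, ← List.countP_eq_length_filter] using hT
  set l' : List X := l.take t with hl'
  have hl'nd : l'.Nodup := hlnd.sublist (List.take_sublist _ _)
  have hl'len : l'.length = t := by simp [hl', hllen]
  apply hfree
  refine ⟨l'.toFinset, by rw [List.toFinset_card_of_nodup hl'nd, hl'len], ?_⟩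
  obtain ⟨𝒯, h𝒯sub, h𝒯card⟩ := Finset.exists_subset_card_eq hcard
  refine ⟨𝒯, h𝒯sub.trans (Finset.filter_subset _ _), h𝒯card, ?_⟩
  intro x hx c hc
  have hcV : c ∈ Vs 𝒞 hist := h𝒯sub hc
  have hcons : ∀ p ∈ hist, c p.1 = p.2 := (Finset.mem_filter.mp hcV).2
  rw [List.mem_toFinset] at hx
  have hx' : x ∈ l := (List.take_sublist _ _).subset hx
  rw [hl, List.mem_map] at hx'
  obtain ⟨p, hp, hpx⟩ := hx'
  rw [List.mem_filter] at hp
  rw [← hpx, hcons p hp.1, hp.2]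

open Classical in
lemma halving_le {X : Type*} (V : Finset (X → Bool)) (x : X) (y : Bool)
    (h : (decide (V.card < 2 * (V.filter (fun c => c x = true)).card)) ≠ y) :
    2 * (V.filter (fun c => c x = y)).card ≤ V.card := by
  have hsplit := Finset.card_filter_add_card_filter_not
    (s := V) (p := fun c => c x = true)
  have hBeq : V.filter (fun c => ¬ (c x = true)) = V.filter (fun c => c x = false) :=
    Finset.filter_congr (fun c _ => by simp)
  rw [hBeq] at hsplit
  cases y with
  | true =>
    have h2 : ¬ (V.card < 2 * (V.filter (fun c => c x = true)).card) := by
      simpa using h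
    exact Nat.le_of_not_lt h2
  | false =>
    have h2 : V.card < 2 * (V.filter (fun c => c x = true)).card := by
      simpa using h
    linarith

open Classical in
lemma main_bound {X : Type*} (t : ℕ) (𝒞 : Finset (X → Bool))
    (hfree : ¬ ContainsK 𝒞 t (2 ^ t)) :
    ∀ L hist : List (X × Bool),
      (((hist ++ L).map Prod.fst)).Nodup →
      (∃ c ∈ 𝒞, ∀ p ∈ hist ++ L, c p.1 = p.2) →
      mistakesAux (learner t 𝒞) hist L ≤
        (t - hist.countP (fun p => p.2)) +
          (if hist.countP (fun p => p.2) < t then t - 1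
           else Nat.log 2 (Vs 𝒞 hist).card) := by
  intro L
  induction L with
  | nil => intro hist _ _; simp [mistakesAux]
  | cons q rest ih =>
    obtain ⟨x, y⟩ := q
    intro hist hnd hreal
    have hassoc : hist ++ (x, y) :: rest = (hist ++ [(x, y)]) ++ rest := by simp
    rw [hassoc] at hnd hreal
    have IH := ih (hist ++ [(x, y)]) hnd hreal
    set T := hist.countP (fun p => p.2) with hTdef
    set V := Vs 𝒞 hist with hVdef
    have hT' : (hist ++ [(x, y)]).countP (fun p => p.2) = T + (if y then 1 else 0) := by
      simp [List.countP_append, hTdef, List.countP_cons]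
    obtain ⟨c, hc𝒞, hccons⟩ := hreal
    have hcV' : c ∈ Vs 𝒞 (hist ++ [(x, y)]) := by
      refine Finset.mem_filter.mpr ⟨hc𝒞, fun p hp => hccons p ?_⟩
      exact List.mem_append_left _ hp
    have hnd2 : ((hist ++ [(x, y)]).map Prod.fst).Nodup := by
      rw [List.map_append] at hnd
      exact hnd.of_append_left
    have hV' : Vs 𝒞 (hist ++ [(x, y)]) = V.filter (fun c => c x = y) := Vs_append 𝒞 hist (x, y)
    simp only [mistakesAux]
    refine le_trans (Nat.add_le_add_left IH _) ?_
    by_cases hph : T < t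
    · -- phase 1
      have hlearn : learner t 𝒞 hist x = false := by
        rw [learner, if_pos]; exact hph
      cases y with
      | false =>
        have hT'eq : (hist ++ [(x, false)]).countP (fun p => p.2) = T := by
          simpa using hT'
        rw [hlearn]
        simp [hT'eq, hph]
      | true =>
        have hT'eq : (hist ++ [(x, true)]).countP (fun p => p.2) = T + 1 := by
          simpa using hT'
        rw [hlearn]
        rw [hT'eq]
        set B' := (if T + 1 < t then t - 1
            else Nat.log 2 (Vs 𝒞 (hist ++ [(x, true)])).card) with hB'def
        have hB' : B' ≤ t - 1 := by
          rw [hB'def]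
          by_cases h2 : T + 1 < t
          · rw [if_pos h2]
          · rw [if_neg h2]
            have hle : t ≤ (hist ++ [(x, true)]).countP (fun p => p.2) := by omega
            have hcard := card_Vs_lt hfree (hist ++ [(x, true)]) hnd2 hle
            rcases Nat.eq_zero_or_pos (Vs 𝒞 (hist ++ [(x, true)])).card with h0 | h0
            · rw [h0]; simp
            · have hlt := Nat.log_lt_of_lt_pow (by omega) hcard
              omega
        have hif : (if (false : Bool) ≠ true then 1 else 0) = 1 := by simp
        rw [hif, if_pos hph]
        omega
    · -- phase 2
      have ht2 : t ≤ T := le_of_not_gt hph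
      have hT'ge : t ≤ (hist ++ [(x, y)]).countP (fun p => p.2) := by
        rw [hT']; omega
      have hph' : ¬ (hist ++ [(x, y)]).countP (fun p => p.2) < t := by omega
      rw [if_neg hph, if_neg hph', hT', hV']
      have hsub : V.filter (fun c => c x = y) ⊆ V := Finset.filter_subset _ _
      by_cases hm : learner t 𝒞 hist x ≠ y
      · -- mistake
        have hlearn2 : learner t 𝒞 hist x
            = decide (V.card < 2 * (V.filter (fun c => c x = true)).card) := by
          rw [learner, if_neg hph]
        rw [hlearn2] at hm
        have hhalf := halving_le V x y hm
        have hpos : 1 ≤ (V.filter (fun c => c x = y)).card := by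
          refine Finset.card_pos.mpr ⟨c, ?_⟩
          rw [← hV']; exact hcV'
        have hlog : Nat.log 2 (V.filter (fun c => c x = y)).card + 1 ≤ Nat.log 2 V.card := by
          have hmul : Nat.log 2 ((V.filter (fun c => c x = y)).card * 2)
              = Nat.log 2 (V.filter (fun c => c x = y)).card + 1 :=
            Nat.log_mul_base one_lt_two (Nat.one_le_iff_ne_zero.mp hpos)
          have hmono : Nat.log 2 ((V.filter (fun c => c x = y)).card * 2)
              ≤ Nat.log 2 V.card := Nat.log_mono_right (by rw [mul_comm]; exact hhalf)
          exact le_trans (le_of_eq hmul.symm) hmono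
        rw [hlearn2, if_pos hm]
        set w := (if y = true then 1 else 0) with hw
        have hz1 : t - T = 0 := Nat.sub_eq_zero_of_le ht2
        have hz2 : t - (T + w) = 0 := Nat.sub_eq_zero_of_le (le_trans ht2 (Nat.le_add_right _ _))
        rw [hz2, hz1]
        linarith [hlog]
      · -- correct prediction
        rw [if_neg hm]
        have hmono : Nat.log 2 (V.filter (fun c => c x = y)).card ≤ Nat.log 2 V.card :=
          Nat.log_mono_right (Finset.card_le_card hsub)
        set w := (if y = true then 1 else 0) with hw
        have hz1 : t - T = 0 := Nat.sub_eq_zero_of_le ht2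
        have hz2 : t - (T + w) = 0 := Nat.sub_eq_zero_of_le (le_trans ht2 (Nat.le_add_right _ _))
        rw [hz2, hz1]
        linarith [hmono]
theorem littlestone_from_biclique_free {X : Type*} (t : ℕ) (𝒞 : Finset (X → Bool))
    (hfree : ¬ ContainsK 𝒞 t (2 ^ t)) :
    ∃ 𝔸 : List (X × Bool) → X → Bool,
      ∀ L : List (X × Bool),
        (L.map Prod.fst).Nodup →
        (∃ c ∈ 𝒞, ∀ p ∈ L, c p.1 = p.2) →
        mistakes 𝔸 L < 2 * t := by
  refine ⟨learner t 𝒞, ?_⟩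
  intro L hnd hreal
  rcases Nat.eq_zero_or_pos t with ht0 | ht1
  · exfalso
    apply hfree
    obtain ⟨c, hc, _⟩ := hreal
    subst ht0
    exact ⟨∅, Finset.card_empty, {c}, by simpa using hc, by simp, by simp⟩
  · have h := main_bound t 𝒞 hfree L [] (by simpa using hnd) (by simpa using hreal)
    rw [mistakes]
    simp only [List.countP_nil, Nat.sub_zero] at h
    simp only [show (0 < t) = True from eq_true ht1, if_true, ↓reduceIte] at h
    exact lt_of_le_of_lt h (by omega)
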